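/- Theorem 2 (general form): let {u_n(t)} solve the (N,α)-regularized initial value problem with initial data a, and let t = m + τ_{i_1} + ⋯ + τ_{i_k} with integers m ≥ 0 and 0 = i_0 < i_1 < ⋯ < i_k ≤ N. Then (u_{i_k}(t), u_{i_k+1}(t), …) = Ψ_k ∘ ⋯ ∘ Ψ_1 ∘ (φ^{(N,α)})^{∘m}(a), where Ψ_j = ξ ∘ σ_+^{Δi_j − 1} + φ^{(N−i_j,α)} ∘ σ_+^{Δi_j} and Δi_j = i_j − i_{j−1}. -/

import Mathlib

/-!
Dynamics on the fractal space-time lattice (scales `n = 0,1,2,…`, turnover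
times `τ_n = 2⁻ⁿ`).  The state of scale `n` at lattice time `t = m * τ_n`
is encoded as `u n m` (per-scale time index `m`).
-/

/-- The transfer fraction `f_n(t)` of the `(N,α)`-regularized system at scale `n`
and per-scale time index `m` (so real time `t = m * 2⁻ⁿ`):
`f_n(t) = f (u_n(t), u_{n+1}(t))` for `n < N` and `f_N(t) = α`.
Note that `u_{n+1}(t)` has per-scale time index `2 * m`. -/
noncomputable def transfer (f : ℝ → ℝ → ℝ) (N : ℕ) (α : ℝ) (u : ℕ → ℕ → ℝ)
    (n m : ℕ) : ℝ :=
  if n < N then f (u n m) (u (n + 1) (2 * m)) else α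

/-- `IsSol f N α a u` says that the field `{u_n(t)}`, encoded as `u n m` with
`t = m * τ_n`, `τ_n = 2⁻ⁿ`, solves the `(N,α)`-regularized initial value
problem on the fractal lattice with initial data `a`:
* `u_n(0) = a_n`;
* for `n ≤ N` and `t = m * τ_n`,
  `u_n(t + τ_n) = (1 − f_n(t)) u_n(t) + χ_even(m) f_{n−1}(t) u_{n−1}(t)`,
  where `u_{−1} ≡ 0` (the incoming term is absent for `n = 0`) and `u_{n-1}(t)`
  has per-scale index `m / 2` (the incoming term is present only for even `m`);
* `u_n(t) = 0` for `n > N` and `t > 0`. -/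
noncomputable def IsSol (f : ℝ → ℝ → ℝ) (N : ℕ) (α : ℝ) (a : ℕ → ℝ)
    (u : ℕ → ℕ → ℝ) : Prop :=
  (∀ n, u n 0 = a n) ∧
  (∀ n, n ≤ N → ∀ m : ℕ,
    u n (m + 1) = (1 - transfer f N α u n m) * u n m +
      (if Even m ∧ n ≠ 0 then transfer f N α u (n - 1) (m / 2) * u (n - 1) (m / 2)
       else 0)) ∧
  (∀ n, N < n → ∀ m : ℕ, 0 < m → u n m = 0)

/-- `sol1 u` is the state `u(1)` at the large-scale turnover time `τ_0 = 1`: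
the `n`-th component is `u_n(1)`, whose per-scale time index is `2^n`. -/
def sol1 (u : ℕ → ℕ → ℝ) : ℕ → ℝ := fun n => u n (2 ^ n)

/-- The left shift `σ₊(a) = (a_1, a_2, …)`. -/
def sigmaPlus (a : ℕ → ℝ) : ℕ → ℝ := fun n => a (n + 1)

/-- The right shift `σ₋(a) = (0, a_0, a_1, …)`. -/
def sigmaMinus (a : ℕ → ℝ) : ℕ → ℝ := fun n => if n = 0 then 0 else a (n - 1)

/-- The large-scale projector `π₀(a) = (a_0, 0, 0, …)`. -/
def piZero (a : ℕ → ℝ) : ℕ → ℝ := fun n => if n = 0 then a 0 else 0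

/-- The energy transfer map `ξ(a) = (f(a_0,a_1)·a_0, 0, 0, …)`. -/
def xiMap (f : ℝ → ℝ → ℝ) (a : ℕ → ℝ) : ℕ → ℝ :=
  fun n => if n = 0 then f (a 0) (a 1) * a 0 else 0

lemma sigmaPlus_iterate (b : ℕ → ℝ) (t n : ℕ) : sigmaPlus^[t] b n = b (n + t) := by
  induction t generalizing b n with
  | zero => rfl
  | succ t ih =>
    rw [Function.iterate_succ_apply, ih]
    rfl

lemma sol_unique (f : ℝ → ℝ → ℝ) (N : ℕ) (α : ℝ) (a : ℕ → ℝ)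
    (u v : ℕ → ℕ → ℝ) (hu : IsSol f N α a u) (hv : IsSol f N α a v) :
    ∀ n m, u n m = v n m := by
  obtain ⟨hu0, hur, huz⟩ := hu
  obtain ⟨hv0, hvr, hvz⟩ := hv
  have key : ∀ s : ℕ, ∀ n m, n ≤ N → m * 2 ^ (N - n) = s → u n m = v n m := by
    intro s
    induction s using Nat.strong_induction_on with
    | _ s ih =>
      intro n m hn hs
      match m with
      | 0 => rw [hu0, hv0]
      | m + 1 =>
        have hpow : 0 < 2 ^ (N - n) := Nat.pow_pos (by norm_num)
        have hms : m * 2 ^ (N - n) < s := by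
          subst hs; exact Nat.mul_lt_mul_of_lt_of_le (Nat.lt_succ_self m) le_rfl hpow
        have h1 : u n m = v n m := ih _ hms n m hn rfl
        have ht : transfer f N α u n m = transfer f N α v n m := by
          unfold transfer
          split
          next h =>
            have h2 : u (n + 1) (2 * m) = v (n + 1) (2 * m) := by
              refine ih _ ?_ (n + 1) (2 * m) (by omega) rfl
              have : 2 * m * 2 ^ (N - (n + 1)) = m * 2 ^ (N - n) := by
                have hNn : N - n = (N - (n + 1)) + 1 := by omega
                rw [hNn, pow_succ]; ring
              omega
            rw [h1, h2]
          next => rfl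
        rw [hur n hn m, hvr n hn m, ht, h1]
        congr 1
        split
        next h =>
          obtain ⟨hm, hn0⟩ := h
          obtain ⟨c, hc⟩ := hm
          have hc2 : m / 2 = c := by omega
          have hmeq : m / 2 * 2 ^ (N - (n - 1)) = m * 2 ^ (N - n) := by
            have hNn : N - (n - 1) = (N - n) + 1 := by omega
            subst hc
            rw [hNn, pow_succ, hc2]; ring
          have h3 : u (n - 1) (m / 2) = v (n - 1) (m / 2) :=
            ih _ (by omega) (n - 1) (m / 2) (by omega) rfl
          have ht2 : transfer f N α u (n - 1) (m / 2) = transfer f N α v (n - 1) (m / 2) := by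
            unfold transfer
            split
            next =>
              have h4 : u (n - 1 + 1) (2 * (m / 2)) = v (n - 1 + 1) (2 * (m / 2)) := by
                have hn1 : n - 1 + 1 = n := by omega
                have hm2 : 2 * (m / 2) = m := by omega
                rw [hn1, hm2]; exact h1
              rw [h3, h4]
            next => rfl
          rw [h3, ht2]
        next => rfl
  intro n m
  by_cases hn : n ≤ N
  · exact key _ n m hn rfl
  · match m with
    | 0 => rw [hu0, hv0]
    | m + 1 =>
      rw [huz n (by omega) _ (Nat.succ_pos m), hvz n (by omega) _ (Nat.succ_pos m)]
lemma sol_shift (f : ℝ → ℝ → ℝ) (N : ℕ) (α : ℝ) (a : ℕ → ℝ)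
    (u : ℕ → ℕ → ℝ) (hu : IsSol f N α a u) (r : ℕ) :
    IsSol f N α (fun n => u n (r * 2 ^ n)) (fun n m => u n (r * 2 ^ n + m)) := by
  obtain ⟨hu0, hur, huz⟩ := hu
  refine ⟨fun n => rfl, ?_, ?_⟩
  · intro n hn m
    have key := hur n hn (r * 2 ^ n + m)
    have hidx : r * 2 ^ n + m + 1 = r * 2 ^ n + (m + 1) := by omega
    have ht : transfer f N α u n (r * 2 ^ n + m)
        = transfer f N α (fun n m => u n (r * 2 ^ n + m)) n m := by
      unfold transfer
      split
      next =>
        have : 2 * (r * 2 ^ n + m) = r * 2 ^ (n + 1) + 2 * m := by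
          rw [pow_succ]; ring
        rw [this]
      next => rfl
    rw [hidx] at key
    beta_reduce
    rw [key, ht]
    congr 1
    by_cases hn0 : n = 0
    · subst hn0
      simp
    · obtain ⟨n', rfl⟩ : ∃ n', n = n' + 1 := ⟨n - 1, by omega⟩
      have hpar : (Even (r * 2 ^ (n' + 1) + m) ∧ n' + 1 ≠ 0) ↔ (Even m ∧ n' + 1 ≠ 0) := by
        constructor
        · rintro ⟨he, -⟩
          refine ⟨?_, by omega⟩
          have : Even (r * 2 ^ (n' + 1)) := by
            refine Even.mul_left ⟨2 ^ n', ?_⟩ r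
            rw [pow_succ]; ring
          simpa [Nat.even_add, this] using he
        · rintro ⟨he, -⟩
          refine ⟨?_, by omega⟩
          have h2 : Even (r * 2 ^ (n' + 1)) := by
            refine Even.mul_left ⟨2 ^ n', ?_⟩ r
            rw [pow_succ]; ring
          exact h2.add he
      rw [if_congr hpar rfl rfl]
      split
      next h =>
        obtain ⟨hm, -⟩ := h
        obtain ⟨c, rfl⟩ := hm
        have hdiv : (r * 2 ^ (n' + 1) + (c + c)) / 2 = r * 2 ^ n' + c := by
          have : r * 2 ^ (n' + 1) + (c + c) = 2 * (r * 2 ^ n' + c) := by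
            rw [pow_succ]; ring
          omega
        have hdiv2 : (c + c) / 2 = c := by omega
        have hsimp : n' + 1 - 1 = n' := by omega
        rw [hdiv, hdiv2, hsimp]
        have ht2 : transfer f N α u n' (r * 2 ^ n' + c)
            = transfer f N α (fun n m => u n (r * 2 ^ n + m)) n' c := by
          unfold transfer
          split
          next =>
            have : 2 * (r * 2 ^ n' + c) = r * 2 ^ (n' + 1) + 2 * c := by
              rw [pow_succ]; ring
            rw [this]
          next => rfl
        rw [ht2]
      next => rfl
  · intro n hn m hm
    exact huz n hn _ (by omega)
lemma interval_lemma (f : ℝ → ℝ → ℝ) (N I : ℕ) (α : ℝ) (a b : ℕ → ℝ)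
    (u w : ℕ → ℕ → ℝ) (hu : IsSol f N α a u) (hw : IsSol f (N - I) α b w)
    (hIN : I ≤ N) (e : ℕ)
    (hdata : ∀ n, u (I + n) (e * 2 ^ n) = w n 0) :
    ∀ q m', m' ≤ 2 ^ q → (1 ≤ q ∨ m' = 0) →
      u (I + q) (e * 2 ^ q + m') = w q m' := by
  obtain ⟨hu0, hur, huz⟩ := hu
  obtain ⟨hw0, hwr, hwz⟩ := hw
  have key : ∀ s, ∀ q m', q ≤ N - I → m' ≤ 2 ^ q → (1 ≤ q ∨ m' = 0) →
      m' * 2 ^ (N - I - q) = s → u (I + q) (e * 2 ^ q + m') = w q m' := by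
    intro s
    induction s using Nat.strong_induction_on with
    | _ s ih =>
    intro q m' hq hb hqm hs
    match m' with
    | 0 => simpa using hdata q
    | m' + 1 =>
      have hq1 : 1 ≤ q := by
        rcases hqm with h | h
        · exact h
        · omega
      obtain ⟨q', rfl⟩ : ∃ q', q = q' + 1 := ⟨q - 1, by omega⟩
      set Q := q' + 1 with hQ
      have hIqN : I + Q ≤ N := by omega
      have hpow : 0 < 2 ^ (N - I - Q) := Nat.pow_pos (by norm_num)
      have hms : m' * 2 ^ (N - I - Q) < s := by
        subst hs; exact Nat.mul_lt_mul_of_lt_of_le (Nat.lt_succ_self m') le_rfl hpow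
      -- previous step same scale
      have h1 : u (I + Q) (e * 2 ^ Q + m') = w Q m' :=
        ih _ hms Q m' hq (by omega) (Or.inl hq1) rfl
      -- transfer equality at scale I + Q
      have ht : transfer f N α u (I + Q) (e * 2 ^ Q + m') = transfer f (N - I) α w Q m' := by
        unfold transfer
        by_cases hlt : Q < N - I
        · rw [if_pos (by omega), if_pos hlt]
          have h2 : u (I + Q + 1) (2 * (e * 2 ^ Q + m')) = w (Q + 1) (2 * m') := by
            have hi2 : 2 * (e * 2 ^ Q + m') = e * 2 ^ (Q + 1) + 2 * m' := by
              rw [pow_succ]; ring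
            have := ih (2 * m' * 2 ^ (N - I - (Q + 1))) ?_ (Q + 1) (2 * m')
              (by omega) (by rw [pow_succ]; omega) (Or.inl (by omega)) rfl
            · rw [hi2]
              have hadd : I + Q + 1 = I + (Q + 1) := by omega
              rw [hadd]; exact this
            · have heq : 2 * m' * 2 ^ (N - I - (Q + 1)) = m' * 2 ^ (N - I - Q) := by
                have : N - I - Q = (N - I - (Q + 1)) + 1 := by omega
                rw [this, pow_succ]; ring
              omega
          rw [h1, h2]
        · rw [if_neg (by omega), if_neg hlt]
      have key_u := hur (I + Q) hIqN (e * 2 ^ Q + m')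
      have key_w := hwr Q hq m'
      have hidx : e * 2 ^ Q + m' + 1 = e * 2 ^ Q + (m' + 1) := by omega
      rw [hidx] at key_u
      rw [key_u, key_w, ht, h1]
      congr 1
      have hpar : (Even (e * 2 ^ Q + m') ∧ I + Q ≠ 0) ↔ (Even m' ∧ Q ≠ 0) := by
        have heven : Even (e * 2 ^ Q) := by
          refine Even.mul_left ⟨2 ^ q', ?_⟩ e
          rw [hQ, pow_succ]; ring
        constructor
        · rintro ⟨he, -⟩
          exact ⟨by simpa [Nat.even_add, heven] using he, by omega⟩
        · rintro ⟨he, -⟩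
          exact ⟨heven.add he, by omega⟩
      rw [if_congr hpar rfl rfl]
      split
      next h =>
        obtain ⟨hm, -⟩ := h
        obtain ⟨c, rfl⟩ := hm
        have hdiv : (e * 2 ^ Q + (c + c)) / 2 = e * 2 ^ q' + c := by
          have : e * 2 ^ Q + (c + c) = 2 * (e * 2 ^ q' + c) := by
            rw [hQ, pow_succ]; ring
          omega
        have hdiv2 : (c + c) / 2 = c := by omega
        have hc1 : c ≤ 2 ^ q' := by
          have : c + c ≤ 2 ^ Q := by omega
          rw [hQ, pow_succ] at this; omega
        have hcq : 1 ≤ q' ∨ c = 0 := by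
          rcases Nat.lt_or_ge q' 1 with h | h
          · right
            have : q' = 0 := by omega
            subst this
            have : c ≤ 1 := by simpa using hc1
            -- c + c ≤ 2 ^ 1 - 1 = 1, so c = 0
            have hcc : c + c ≤ 2 ^ Q - 1 := by omega
            simp [hQ] at hcc
            omega
          · left; exact h
        have h3 : u (I + q') (e * 2 ^ q' + c) = w q' c := by
          refine ih (c * 2 ^ (N - I - q')) ?_ q' c (by omega) hc1 hcq rfl
          have heq : c * 2 ^ (N - I - q') = (c + c) * 2 ^ (N - I - Q) := by
            have : N - I - q' = (N - I - Q) + 1 := by omega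
            rw [this, pow_succ]; ring
          omega
        have hsub : I + Q - 1 = I + q' := by omega
        have ht3 : transfer f N α u (I + q') (e * 2 ^ q' + c)
            = transfer f (N - I) α w q' c := by
          unfold transfer
          rw [if_pos (by omega), if_pos (by omega)]
          have h4 : u (I + q' + 1) (2 * (e * 2 ^ q' + c)) = w (q' + 1) (2 * c) := by
            have hi2 : 2 * (e * 2 ^ q' + c) = e * 2 ^ Q + 2 * c := by
              rw [hQ, pow_succ]; ring
            have h2c : 2 * c = c + c := by ring
            rw [hi2, h2c]
            have hadd : I + q' + 1 = I + Q := by omega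
            rw [hadd]
            have h2c' : e * 2 ^ Q + (c + c) = e * 2 ^ Q + (c + c) := rfl
            exact ih _ (by omega) Q (c + c) hq (by omega) (Or.inl hq1) rfl
          rw [h3, h4]
        have hQ1 : Q - 1 = q' := by omega
        rw [hsub, hdiv, hdiv2, ht3, h3, hQ1]
      next => rfl
  intro q m' hb hqm
  by_cases hq : q ≤ N - I
  · exact key _ q m' hq hb hqm rfl
  · match m' with
    | 0 => simpa using hdata q
    | m' + 1 =>
      rw [huz (I + q) (by omega) _ (by omega), hwz q (by omega) _ (by omega)]

/-- Theorem 2, general form: let `u` solve the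
`(N,α)`-regularized initial value problem with data `a` and consider the time
`t = m + τ_{i_1} + ⋯ + τ_{i_k}` with `0 = i_0 < i_1 < ⋯ < i_k ≤ N`.
Let `A r` be the `r`-th iterate of the flow map `φ^{(N,α)}` on `a`, realized by
a chain of solutions `V r` (so `A m = (φ^{(N,α)})^{∘m}(a)`), and let
`S j = Ψ_j ∘ ⋯ ∘ Ψ_1 (A m)` be realized by solutions `W j`, where
`Ψ_j = ξ ∘ σ₊^{Δi_j − 1} + φ^{(N − i_j,α)} ∘ σ₊^{Δi_j}`, `Δi_j = i_j − i_{j−1}`.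
Then `(u_{i_k}(t), u_{i_k+1}(t), …) = S k`; at scale `n = i_k + q` the
per-scale time index of `t` is `m·2^n + Σ_{j=1}^{k} 2^{n − i_j}`. -/
theorem theorem2_general
    (f : ℝ → ℝ → ℝ) (hf : ∀ x y : ℝ, 0 ≤ x → 0 ≤ y → f x y ∈ Set.Icc (0 : ℝ) 1)
    (N : ℕ) (α : ℝ) (hα : α ∈ Set.Icc (0 : ℝ) 1)
    (a : ℕ → ℝ) (ha : ∀ n, 0 ≤ a n)
    (u : ℕ → ℕ → ℝ) (hu : IsSol f N α a u)
    (m k : ℕ) (i : ℕ → ℕ)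
    (hi0 : i 0 = 0) (himono : ∀ j, j < k → i j < i (j + 1)) (hik : i k ≤ N)
    (A : ℕ → ℕ → ℝ) (hA0 : A 0 = a)
    (V : ℕ → ℕ → ℕ → ℝ)
    (hV : ∀ r, r < m → IsSol f N α (A r) (V r) ∧ A (r + 1) = sol1 (V r))
    (S : ℕ → ℕ → ℝ) (hS0 : S 0 = A m)
    (W : ℕ → ℕ → ℕ → ℝ)
    (hW : ∀ j, j < k →
      IsSol f (N - i (j + 1)) α (sigmaPlus^[i (j + 1) - i j] (S j)) (W j) ∧
      S (j + 1) = xiMap f (sigmaPlus^[i (j + 1) - i j - 1] (S j)) + sol1 (W j)) :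
    ∀ q : ℕ,
      u (i k + q)
        (m * 2 ^ (i k + q) + ∑ j ∈ Finset.range k, 2 ^ (i k + q - i (j + 1))) =
      S k q := by
  -- monotonicity of i on [0, k]
  have himono' : ∀ j', j' ≤ k → ∀ j, j ≤ j' → i j ≤ i j' := by
    intro j'
    induction j' with
    | zero =>
      intro _ j hj
      have : j = 0 := by omega
      subst this; exact le_rfl
    | succ j' ih =>
      intro h j hj
      rcases Nat.eq_or_lt_of_le hj with rfl | hlt
      · exact le_rfl
      · exact le_trans (ih (by omega) j (by omega)) (le_of_lt (himono j' (by omega)))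
  -- the iterated flow map
  have hAm : ∀ r, r ≤ m → ∀ n, u n (r * 2 ^ n) = A r n := by
    intro r
    induction r with
    | zero =>
      intro _ n
      simp only [Nat.zero_mul, hA0]
      exact hu.1 n
    | succ r ih =>
      intro hr n
      obtain ⟨hVsol, hVnext⟩ := hV r (by omega)
      have hdata : (fun n => u n (r * 2 ^ n)) = A r := funext fun n => ih (by omega) n
      have hshift := sol_shift f N α a u hu r
      rw [hdata] at hshift
      have huniq := sol_unique f N α (A r) _ _ hVsol hshift
      rw [hVnext]
      have h1 : sol1 (V r) n = u n (r * 2 ^ n + 2 ^ n) := huniq n (2 ^ n)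
      rw [h1]
      congr 1
      ring
  -- main induction on the number of sub-turnover visits
  have main : ∀ k', k' ≤ k → ∀ q,
      u (i k' + q)
        (m * 2 ^ (i k' + q) + ∑ j ∈ Finset.range k', 2 ^ (i k' + q - i (j + 1))) =
      S k' q := by
    intro k'
    induction k' with
    | zero =>
      intro _ q
      simp only [hi0, Finset.range_zero, Finset.sum_empty, Nat.zero_add, Nat.add_zero, hS0]
      exact hAm m le_rfl q
    | succ k' ih =>
      intro hk q
      have IH := ih (by omega)
      obtain ⟨hWsol, hWnext⟩ := hW k' (by omega)
      have hik' : i k' < i (k' + 1) := himono k' (by omega)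
      have hI1 : 1 ≤ i (k' + 1) := by
        have := himono' k' (by omega) 0 (by omega)
        omega
      have hIN : i (k' + 1) ≤ N :=
        le_trans (himono' k le_rfl (k' + 1) hk) hik
      have hd1 : 1 ≤ i (k' + 1) - i k' := by omega
      have hij : ∀ j, j < k' → i (j + 1) ≤ i k' := fun j hj =>
        himono' k' (by omega) (j + 1) (by omega)
      -- abbreviations
      set I := i (k' + 1) with hIdef
      set d := I - i k' with hddef
      set e := m * 2 ^ I + ∑ j ∈ Finset.range k', 2 ^ (I - i (j + 1)) with hedef
      have hp : ∀ t : ℕ, 1 ≤ t → 2 * 2 ^ (t - 1) = 2 ^ t := by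
        intro t ht
        conv_rhs => rw [show t = t - 1 + 1 from by omega]
        rw [pow_succ]; ring
      have F1 : ∀ n, m * 2 ^ (i k' + (d + n)) +
          ∑ j ∈ Finset.range k', 2 ^ (i k' + (d + n) - i (j + 1)) = e * 2 ^ n := by
        intro n
        rw [show i k' + (d + n) = I + n from by omega, hedef, add_mul, Finset.sum_mul,
          mul_assoc, ← pow_add]
        congr 1
        refine Finset.sum_congr rfl fun j hj => ?_
        rw [← pow_add]
        congr 1
        have := hij j (Finset.mem_range.mp hj)
        omega
      have hdata : ∀ n, u (I + n) (e * 2 ^ n) = W k' n 0 := by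
        intro n
        have h := IH (d + n)
        rw [F1 n, show i k' + (d + n) = I + n from by omega] at h
        rw [h, hWsol.1 n, sigmaPlus_iterate]
        congr 1
        omega
      have hint := interval_lemma f N I α a (sigmaPlus^[d] (S k')) u (W k') hu hWsol hIN e hdata
      have F2 : m * 2 ^ (I + q) + ∑ j ∈ Finset.range (k' + 1), 2 ^ (I + q - i (j + 1)) =
          e * 2 ^ q + 2 ^ q := by
        rw [Finset.sum_range_succ, ← Nat.add_assoc]
        congr 1
        · have h := F1 q
          rw [show i k' + (d + q) = I + q from by omega] at h
          exact h
        · congr 1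
          omega
      rw [show m * 2 ^ (I + q) + ∑ j ∈ Finset.range (k' + 1), 2 ^ (I + q - i (j + 1)) =
          e * 2 ^ q + 2 ^ q from F2]
      rcases Nat.eq_zero_or_pos q with rfl | hq
      · -- q = 0 : the xiMap injection
        simp only [pow_zero, Nat.mul_one, Nat.add_zero]
        set e' := m * 2 ^ (I - 1) + ∑ j ∈ Finset.range k', 2 ^ (I - 1 - i (j + 1)) with he'def
        have he2 : e = 2 * e' := by
          rw [hedef, he'def, Nat.mul_add, Finset.mul_sum]
          congr 1
          · rw [Nat.mul_left_comm 2 m, hp I hI1]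
          · refine Finset.sum_congr rfl fun j hj => ?_
            have hj' := hij j (Finset.mem_range.mp hj)
            rw [show I - 1 - i (j + 1) = I - i (j + 1) - 1 from by omega,
              hp (I - i (j + 1)) (by omega)]
        have hE' : m * 2 ^ (i k' + (d - 1)) +
            ∑ j ∈ Finset.range k', 2 ^ (i k' + (d - 1) - i (j + 1)) = e' := by
          rw [show i k' + (d - 1) = I - 1 from by omega, he'def]
        have hSd1 : u (I - 1) e' = S k' (d - 1) := by
          have h := IH (d - 1)
          rw [hE', show i k' + (d - 1) = I - 1 from by omega] at h
          exact h
        have hSd : u I e = S k' d := by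
          have h := IH d
          have h0 := F1 0
          rw [Nat.add_zero] at h0
          rw [h0, pow_zero, Nat.mul_one, show i k' + d = I from by omega] at h
          exact h
        have hSd2 : u (I + 1) (2 * e) = S k' (d + 1) := by
          have h := IH (d + 1)
          rw [F1 1, show i k' + (d + 1) = I + 1 from by omega] at h
          rw [pow_one, Nat.mul_comm] at h
          exact h
        obtain ⟨hu0, hur, huz⟩ := hu
        have key_u := hur I hIN e
        have heven : Even e := ⟨e', by omega⟩
        have hediv : e / 2 = e' := by omega
        rw [if_pos ⟨heven, by omega⟩, hediv] at key_u
        have ht1 : transfer f N α u (I - 1) e' = f (S k' (d - 1)) (S k' d) := by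
          unfold transfer
          rw [if_pos (by omega), hSd1, show I - 1 + 1 = I from by omega,
            show 2 * e' = e from by omega, hSd]
        have key_w := hWsol.2.1 0 (Nat.zero_le _) 0
        rw [if_neg (by simp)] at key_w
        simp only [Nat.zero_add, add_zero] at key_w
        have hW00 : W k' 0 0 = S k' d := by
          rw [hWsol.1 0, sigmaPlus_iterate]
          congr 1
          omega
        have hW10 : W k' 1 0 = S k' (d + 1) := by
          rw [hWsol.1 1, sigmaPlus_iterate]
          congr 1
          omega
        have ht2 : transfer f N α u I e = transfer f (N - I) α (W k') 0 0 := by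
          unfold transfer
          by_cases hlt : I < N
          · rw [if_pos hlt, if_pos (by omega), hSd, hSd2, hW00, Nat.mul_zero, hW10]
          · rw [if_neg hlt, if_neg (by omega)]
        rw [key_u, ht1, ht2, hSd, hSd1]
        rw [hWnext]
        simp only [Pi.add_apply, xiMap, sol1, pow_zero, if_true]
        rw [sigmaPlus_iterate, sigmaPlus_iterate, key_w, hW00,
          show 0 + (d - 1) = d - 1 from by omega,
          show 1 + (d - 1) = d from by omega]
        ring
      · -- q ≥ 1 : pure interval evolution
        rw [hint q (2 ^ q) le_rfl (Or.inl hq)]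
        rw [hWnext]
        simp only [Pi.add_apply, xiMap, sol1]
        rw [if_neg (by omega : ¬ q = 0)]
        ring
  exact main k le_rfl
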